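/- Let F be a field, let M be a k × k matrix over F, let N be an r × k matrix over F, and let λ_1, ..., λ_t be distinct scalars in F. Then the sum over i = 1, ..., t of the rank of the (k+r) × k block matrix obtained by stacking M − λ_i·I on top of N is at least (t−1)·k + rank(N). -/

import Mathlib

open Module Submodule Matrix

/-- Sum of finranks of an independent family over a finset is at most the ambient finrank. -/
lemma aux_sum_finrank_le {K V : Type*} [Field K] [AddCommGroup V] [Module K V]
    [FiniteDimensional K V] {ι : Type*} {W : ι → Submodule K V} (h : iSupIndep W)
    (s : Finset ι) {P : Submodule K V} (hP : ∀ i, W i ≤ P) :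
    ∑ i ∈ s, finrank K (W i) ≤ finrank K P := by
  classical
  have key : ∀ s : Finset ι, ∑ i ∈ s, finrank K (W i) ≤ finrank K ↑(s.sup W) := by
    intro s
    induction s using Finset.induction with
    | empty => simp
    | @insert a s ha ih =>
      rw [Finset.sum_insert ha, Finset.sup_insert]
      have hdisj : Disjoint (W a) (s.sup W) := by
        refine (h a).mono_right ?_
        refine Finset.sup_le fun i hi => ?_
        exact le_iSup₂ (f := fun i (_ : i ≠ a) => W i) i (fun hia => ha (hia ▸ hi))
      have := Submodule.finrank_sup_add_finrank_inf_eq (W a) (s.sup W)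
      rw [hdisj.eq_bot, finrank_bot, add_zero] at this
      rw [this]
      exact Nat.add_le_add_left ih _
  refine (key s).trans (Submodule.finrank_mono ?_)
  exact Finset.sup_le fun i _ => hP i

/-- For a `k × k` matrix `M`, an `r × k` matrix `N`, and distinct scalars `λ 1, …, λ t`,
the sum of the ranks of the stacked matrices `(M - λ i • I; N)` is at least
`(t - 1) * k + rank N`. -/
theorem sum_rank_stacked_ge
    {F : Type*} [Field F] {k r t : ℕ}
    (M : Matrix (Fin k) (Fin k) F) (N : Matrix (Fin r) (Fin k) F)
    (lam : Fin t → F) (hlam : Function.Injective lam) :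
    ((t : ℤ) - 1) * k + N.rank ≤
      ∑ i : Fin t, ((Matrix.fromRows (M - lam i • (1 : Matrix (Fin k) (Fin k) F)) N).rank : ℤ) := by
  rcases Nat.eq_zero_or_pos t with ht | ht
  · subst ht
    simp only [Finset.univ_eq_empty, Finset.sum_empty, Nat.cast_zero]
    have : (N.rank : ℤ) ≤ k := by exact_mod_cast N.rank_le_width
    linarith
  set f := M.mulVecLin with hf
  set K := LinearMap.ker N.mulVecLin with hK
  set W : Fin t → Submodule F (Fin k → F) := fun i => (Module.End.eigenspace f (lam i)) ⊓ K
    with hW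
  -- kernel of each stacked matrix
  have hker : ∀ i, LinearMap.ker
      ((Matrix.fromRows (M - lam i • (1 : Matrix (Fin k) (Fin k) F)) N).mulVecLin) = W i := by
    intro i
    ext x
    simp only [LinearMap.mem_ker, Matrix.mulVecLin_apply, Matrix.fromRows_mulVec, hW,
      Submodule.mem_inf, Module.End.mem_eigenspace_iff, hf, hK]
    constructor
    · intro hx
      have h1 : (M - lam i • (1 : Matrix (Fin k) (Fin k) F)) *ᵥ x = 0 :=
        funext fun a => congrFun hx (Sum.inl a)
      have h2 : N *ᵥ x = 0 := funext fun a => congrFun hx (Sum.inr a)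
      rw [Matrix.sub_mulVec, Matrix.smul_mulVec, Matrix.one_mulVec, sub_eq_zero] at h1
      exact ⟨h1, h2⟩
    · rintro ⟨h1, h2⟩
      have : (M - lam i • (1 : Matrix (Fin k) (Fin k) F)) *ᵥ x = 0 := by
        rw [Matrix.sub_mulVec, Matrix.smul_mulVec, Matrix.one_mulVec, sub_eq_zero]
        exact h1
      funext a
      cases a with
      | inl a => exact congrFun this a
      | inr a => exact congrFun h2 a
  -- rank-nullity for each stacked matrix
  have hrn : ∀ i, (Matrix.fromRows (M - lam i • (1 : Matrix (Fin k) (Fin k) F)) N).rank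
      + finrank F (W i) = k := by
    intro i
    rw [← hker i, Matrix.rank, LinearMap.finrank_range_add_finrank_ker]
    simp
  -- independence
  have hindep : iSupIndep W := by
    have := (Module.End.eigenspaces_iSupIndep f).comp hlam
    exact this.mono fun i => inf_le_left
  have hWle : ∀ i, W i ≤ K := fun i => inf_le_right
  have hsum : ∑ i : Fin t, finrank F (W i) ≤ finrank F K :=
    aux_sum_finrank_le hindep Finset.univ hWle
  -- rank-nullity for N
  have hrnN : N.rank + finrank F K = k := by
    rw [Matrix.rank, hK, LinearMap.finrank_range_add_finrank_ker]
    simp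
  -- finish with arithmetic
  have hfin : ∀ i, ((Matrix.fromRows (M - lam i • (1 : Matrix (Fin k) (Fin k) F)) N).rank : ℤ)
      = (k : ℤ) - finrank F (W i) := by
    intro i
    have := hrn i
    omega
  calc ((t : ℤ) - 1) * k + N.rank
      ≤ (t : ℤ) * k - finrank F K := by
        have : (N.rank : ℤ) + finrank F K = k := by exact_mod_cast hrnN
        ring_nf
        linarith
    _ ≤ (t : ℤ) * k - ∑ i : Fin t, (finrank F (W i) : ℤ) := by
        have : (∑ i : Fin t, (finrank F (W i) : ℤ)) ≤ finrank F K := by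
          exact_mod_cast hsum
        linarith
    _ = ∑ i : Fin t, ((k : ℤ) - finrank F (W i)) := by
        rw [Finset.sum_sub_distrib, Finset.sum_const, Finset.card_univ, Fintype.card_fin,
          nsmul_eq_mul]
    _ = _ := by
        refine Finset.sum_congr rfl fun i _ => ?_
        rw [hfin i]
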